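/- Let X be a metrizable space and p ≥ 1. Then the set C*(X, ℝ^p) of bounded continuous maps from X into ℝ^p is open in C(X, ℝ^p) with respect to the source limitation topology generated by the Euclidean metric on ℝ^p; consequently C*(X, ℝ^p), equipped with this topology, has the Baire property. -/

import Mathlib

open Set Topology Metric BoundedContinuousFunction

noncomputable section

/-- Covering dimension at most `n` (for a natural number `n`): every finite open cover
has an open refinement covering the space such that every point belongs to at most
`n + 1` members of the refinement. -/
def CovDimLENat (X : Type*) [TopologicalSpace X] (n : ℕ) : Prop :=
  ∀ 𝒰 : Set (Set X), 𝒰.Finite → (∀ U ∈ 𝒰, IsOpen U) → ⋃₀ 𝒰 = Set.univ →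
    ∃ 𝒱 : Set (Set X), (∀ V ∈ 𝒱, IsOpen V) ∧ ⋃₀ 𝒱 = Set.univ ∧
      (∀ V ∈ 𝒱, ∃ U ∈ 𝒰, V ⊆ U) ∧
      ∀ x : X, {V ∈ 𝒱 | x ∈ V}.Finite ∧ {V ∈ 𝒱 | x ∈ V}.ncard ≤ n + 1

/-- Covering dimension at most `n` for an integer `n`; negative bounds mean the space
is empty (`dim ∅ = -1`). -/
def CovDimLE (X : Type*) [TopologicalSpace X] (n : ℤ) : Prop :=
  IsEmpty X ∨ ∃ k : ℕ, (k : ℤ) ≤ n ∧ CovDimLENat X k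

/-- A space is finite-dimensional if its covering dimension is at most `n` for some `n`. -/
def FiniteDimSpace (X : Type*) [TopologicalSpace X] : Prop :=
  ∃ n : ℕ, CovDimLENat X n

/-- A perfect map: continuous, closed, with compact fibers. -/
def IsPerfectMap {X Y : Type*} [TopologicalSpace X] [TopologicalSpace Y] (f : X → Y) : Prop :=
  Continuous f ∧ IsClosedMap f ∧ ∀ y : Y, IsCompact (f ⁻¹' {y})

/-- A σ-perfect map: `X` is a countable union of closed sets `A i` whose images are
closed and on which `f` restricts to a perfect map onto its image. -/
def IsSigmaPerfectMap {X Y : Type*} [TopologicalSpace X] [TopologicalSpace Y] (f : X → Y) :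
    Prop :=
  Continuous f ∧ ∃ A : ℕ → Set X, (⋃ i, A i) = Set.univ ∧
    ∀ i, IsClosed (A i) ∧ IsClosed (f '' A i) ∧
      IsPerfectMap (Set.MapsTo.restrict f (A i) (f '' A i) (Set.mapsTo_image f (A i)))

/-- `dim f ≤ k`: every fiber of `f` has covering dimension at most `k`. -/
def DimMapLE {X Y : Type*} [TopologicalSpace X] [TopologicalSpace Y] (f : X → Y) (k : ℤ) :
    Prop :=
  ∀ y : Y, CovDimLE (f ⁻¹' {y}) k

/-- `B_n(h)`: the set of points of the codomain having at least `n` preimages. -/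
def BranchSet {X Z : Type*} (h : X → Z) (n : ℕ) : Set Z :=
  {z | ∃ S : Finset X, n ≤ S.card ∧ ∀ x ∈ S, h x = z}

/-- The source limitation topology on the space of bounded continuous maps. -/
def sourceLimitation (X E : Type*) [TopologicalSpace X] [PseudoMetricSpace E] :
    TopologicalSpace (X →ᵇ E) where
  IsOpen U := ∀ g ∈ U, ∃ α : X → ℝ, Continuous α ∧ (∀ x, 0 < α x) ∧
    ∀ h : X →ᵇ E, (∀ x, dist (h x) (g x) ≤ α x) → h ∈ U
  isOpen_univ := fun g _ =>
    ⟨fun _ => 1, continuous_const, fun _ => one_pos, fun _ _ => trivial⟩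
  isOpen_inter := by
    rintro U V hU hV g ⟨hgU, hgV⟩
    obtain ⟨α, hαc, hαp, hα⟩ := hU g hgU
    obtain ⟨β, hβc, hβp, hβ⟩ := hV g hgV
    exact ⟨fun x => min (α x) (β x), hαc.min hβc, fun x => lt_min (hαp x) (hβp x),
      fun h hh => ⟨hα h fun x => (hh x).trans (min_le_left _ _),
        hβ h fun x => (hh x).trans (min_le_right _ _)⟩⟩
  isOpen_sUnion := by
    rintro S hS g ⟨U, hU, hgU⟩
    obtain ⟨α, hc, hp, h⟩ := hS U hU g hgU
    exact ⟨α, hc, hp, fun h' hh' => ⟨U, hU, h h' hh'⟩⟩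

/-- A C-space. -/
def IsCSpace (Y : Type*) [TopologicalSpace Y] : Prop :=
  ∀ 𝒰 : ℕ → Set (Set Y), (∀ n, (∀ U ∈ 𝒰 n, IsOpen U) ∧ ⋃₀ 𝒰 n = Set.univ) →
    ∃ 𝒱 : ℕ → Set (Set Y),
      (∀ n, (∀ V ∈ 𝒱 n, IsOpen V) ∧ (∀ V ∈ 𝒱 n, ∃ U ∈ 𝒰 n, V ⊆ U) ∧
        (𝒱 n).Pairwise (Disjoint · ·)) ∧
      ⋃₀ (⋃ n, 𝒱 n) = Set.univ

/-- `F` is a `Z_m`-set in `M`: `F` is closed and the maps from the `m`-cube avoiding `F`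
are dense in `C(𝕀^m, M)` (uniform convergence topology). -/
def IsZmSet (m : ℕ) {M : Type*} [TopologicalSpace M] (F : Set M) : Prop :=
  IsClosed F ∧ Dense {u : C((Fin m → unitInterval), M) | ∀ z, u z ∉ F}

/-- `F` is a `Z`-set in `M` if it is a `Z_m`-set for all `m`. -/
def IsZSet {M : Type*} [TopologicalSpace M] (F : Set M) : Prop :=
  ∀ m : ℕ, IsZmSet m F

end

/-- The source limitation topology on the space of all continuous maps. -/
def sourceLimitationCM (X E : Type*) [TopologicalSpace X] [PseudoMetricSpace E] :
    TopologicalSpace C(X, E) where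
  IsOpen U := ∀ g ∈ U, ∃ α : X → ℝ, Continuous α ∧ (∀ x, 0 < α x) ∧
    ∀ h : C(X, E), (∀ x, dist (h x) (g x) ≤ α x) → h ∈ U
  isOpen_univ := fun g _ =>
    ⟨fun _ => 1, continuous_const, fun _ => one_pos, fun _ _ => trivial⟩
  isOpen_inter := by
    rintro U V hU hV g ⟨hgU, hgV⟩
    obtain ⟨α, hαc, hαp, hα⟩ := hU g hgU
    obtain ⟨β, hβc, hβp, hβ⟩ := hV g hgV
    exact ⟨fun x => min (α x) (β x), hαc.min hβc, fun x => lt_min (hαp x) (hβp x),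
      fun h hh => ⟨hα h fun x => (hh x).trans (min_le_left _ _),
        hβ h fun x => (hh x).trans (min_le_right _ _)⟩⟩
  isOpen_sUnion := by
    rintro S hS g ⟨U, hU, hgU⟩
    obtain ⟨α, hc, hp, h⟩ := hS U hU g hgU
    exact ⟨α, hc, hp, fun h' hh' => ⟨U, hU, h h' hh'⟩⟩

open Filter in
lemma slcm_isOpen_bounded {X : Type*} [TopologicalSpace X] {E : Type*} [MetricSpace E] :
    @IsOpen _ (sourceLimitationCM X E) {u : C(X, E) | Bornology.IsBounded (Set.range u)} := by
  intro g hg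
  refine ⟨fun _ => 1, continuous_const, fun _ => one_pos, fun h hh => ?_⟩
  obtain ⟨C, hC⟩ := Metric.isBounded_iff.mp hg
  refine Metric.isBounded_iff.mpr ⟨1 + C + 1, ?_⟩
  rintro _ ⟨x, rfl⟩ _ ⟨y, rfl⟩
  have h1 : dist (g x) (g y) ≤ C := hC ⟨x, rfl⟩ ⟨y, rfl⟩
  have h2 : dist (h x) (g x) ≤ 1 := hh x
  have h3 : dist (h y) (g y) ≤ 1 := hh y
  have h4 : dist (g y) (h y) = dist (h y) (g y) := dist_comm _ _
  calc dist (h x) (h y) ≤ dist (h x) (g x) + dist (g x) (g y) + dist (g y) (h y) :=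
        dist_triangle4 _ _ _ _
    _ ≤ 1 + C + 1 := by rw [h4]; linarith

open Filter in
lemma slcm_baire {X : Type*} [TopologicalSpace X] {E : Type*} [MetricSpace E]
    [CompleteSpace E] :
    @BaireSpace {u : C(X, E) | Bornology.IsBounded (Set.range u)}
      (TopologicalSpace.induced Subtype.val (sourceLimitationCM X E)) := by
  classical
  set S : Set C(X, E) := {u : C(X, E) | Bornology.IsBounded (Set.range u)} with hSdef
  letI T : TopologicalSpace C(X, E) := sourceLimitationCM X E
  refine ⟨fun f hfopen hfdense => ?_⟩
  rw [dense_iff_inter_open]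
  intro V hV hVne
  choose W hWopen hWpre using fun n => isOpen_induced_iff.mp (hfopen n)
  obtain ⟨u₀, hu₀V⟩ := hVne
  obtain ⟨U₀, hU₀open, hU₀pre⟩ := isOpen_induced_iff.mp hV
  have hu₀U : (u₀ : C(X, E)) ∈ U₀ := by rw [← hU₀pre] at hu₀V; exact hu₀V
  obtain ⟨α₀, hα₀c, hα₀p, hα₀⟩ := hU₀open (u₀ : C(X, E)) hu₀U
  -- predicate on pairs
  set Q := C(X, E) × (X → ℝ) with hQdef
  set P : Q → Prop := fun q => Bornology.IsBounded (Set.range q.1) ∧ Continuous q.2 ∧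
    ∀ x, 0 < q.2 x with hPdef
  set Rel : ℕ → Q → Q → Prop := fun n q q' =>
    (∀ x, dist (q'.1 x) (q.1 x) + q'.2 x ≤ q.2 x) ∧
    (∀ x, q'.2 x ≤ (1/2 : ℝ) ^ (n+1)) ∧
    (∀ h : C(X, E), (∀ x, dist (h x) (q'.1 x) ≤ q'.2 x) → h ∈ W n) with hReldef
  have step : ∀ (n : ℕ) (q : {q : Q // P q}), ∃ q' : {q : Q // P q}, Rel n q.1 q'.1 := by
    rintro n ⟨⟨g, β⟩, hgb, hβc, hβp⟩
    -- dense open set meets a small neighborhood of g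
    set M : Set C(X, E) := {h | ∀ x, dist (h x) (g x) < β x} with hMdef
    have hMopen : IsOpen[T] M := by
      intro h hh
      refine ⟨fun x => (β x - dist (h x) (g x)) / 2,
        (hβc.sub ((map_continuous h).dist (map_continuous g))).div_const 2,
        fun x => by have := hh x; simp only [hMdef, mem_setOf_eq] at this ⊢; linarith,
        fun h' hh' x => ?_⟩
      have t1 := hh x
      change dist (h x) (g x) < β x at t1
      have t2 := hh' x
      have t3 : dist (h' x) (g x) ≤ dist (h' x) (h x) + dist (h x) (g x) := dist_triangle _ _ _
      linarith
    have hNopen : IsOpen (Subtype.val ⁻¹' M : Set S) := isOpen_induced_iff.mpr ⟨M, hMopen, rfl⟩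
    have hgS : g ∈ S := hgb
    have hgN : (⟨g, hgS⟩ : S) ∈ (Subtype.val ⁻¹' M : Set S) := by
      simp only [mem_preimage, hMdef, mem_setOf_eq]
      intro x; rw [dist_self]; exact hβp x
    obtain ⟨⟨g', hg'S⟩, hg'N, hg'f⟩ :=
      (hfdense n).inter_open_nonempty _ hNopen ⟨⟨g, hgS⟩, hgN⟩
    have hg'M : ∀ x, dist (g' x) (g x) < β x := hg'N
    have hg'W : g' ∈ W n := by
      rw [← hWpre n] at hg'f; exact hg'f
    obtain ⟨α', hα'c, hα'p, hα'⟩ := hWopen n g' hg'W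
    set β' : X → ℝ := fun x => min (α' x) (min ((1/2 : ℝ) ^ (n+1)) (β x - dist (g' x) (g x)))
      with hβ'def
    have hβ'c : Continuous β' := hα'c.min (continuous_const.min
      (hβc.sub ((map_continuous g').dist (map_continuous g))))
    have hβ'p : ∀ x, 0 < β' x := fun x => lt_min (hα'p x) (lt_min (by positivity)
      (by have := hg'M x; linarith))
    refine ⟨⟨(g', β'), hg'S, hβ'c, hβ'p⟩, ?_, ?_, ?_⟩
    · intro x
      have : β' x ≤ β x - dist (g' x) (g x) := (min_le_right _ _).trans (min_le_right _ _)
      simp only []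
      linarith
    · intro x
      exact (min_le_right _ _).trans (min_le_left _ _)
    · intro h hh
      exact hα' h fun x => (hh x).trans (min_le_left _ _)
  choose nxt hnxt using step
  have hP₀ : P ((u₀ : C(X, E)), α₀) := ⟨u₀.2, hα₀c, hα₀p⟩
  let F : ℕ → {q : Q // P q} := fun n => Nat.rec ⟨((u₀ : C(X, E)), α₀), hP₀⟩
    (fun n ih => nxt n ih) n
  set g : ℕ → C(X, E) := fun n => (F n).1.1 with hgdef
  set β : ℕ → X → ℝ := fun n => (F n).1.2 with hβdef
  have hFsucc : ∀ n, F (n + 1) = nxt n (F n) := fun n => rfl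
  have hrel : ∀ n, Rel n (F n).1 (F (n+1)).1 := fun n => by rw [hFsucc]; exact hnxt n (F n)
  have hPn : ∀ n, P (F n).1 := fun n => (F n).2
  have hβpos : ∀ n x, 0 < β n x := fun n x => (hPn n).2.2 x
  have hβsmall : ∀ n x, β (n+1) x ≤ (1/2 : ℝ) ^ (n+1) := fun n => (hrel n).2.1
  have hstep1 : ∀ n x, dist (g (n+1) x) (g n x) + β (n+1) x ≤ β n x := fun n => (hrel n).1
  -- nested balls
  have nest : ∀ n m, n ≤ m → ∀ h : C(X, E), (∀ x, dist (h x) (g m x) ≤ β m x) →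
      ∀ x, dist (h x) (g n x) ≤ β n x := by
    intro n m hnm
    induction m, hnm using Nat.le_induction with
    | base => exact fun h hh => hh
    | succ m hm ih =>
      intro h hh
      apply ih
      intro x
      have h1 := hstep1 m x
      have h2 := hh x
      have h3 : dist (h x) (g m x) ≤ dist (h x) (g (m+1) x) + dist (g (m+1) x) (g m x) :=
        dist_triangle _ _ _
      linarith
  have key : ∀ n m, n ≤ m → ∀ x, dist (g m x) (g n x) ≤ β n x := fun n m hnm x =>
    nest n m hnm (g m) (fun y => by rw [dist_self]; exact (hβpos m y).le) x
  -- Cauchy sequence at each point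
  have hβsmall' : ∀ n, 1 ≤ n → ∀ x, β n x ≤ (1/2 : ℝ) ^ n := by
    intro n hn x
    cases n with
    | zero => omega
    | succ m => exact hβsmall m x
  have hcauchy : ∀ x, ∃ L : E, Tendsto (fun m => g m x) atTop (𝓝 L) := by
    intro x
    apply cauchySeq_tendsto_of_complete
    rw [Metric.cauchySeq_iff']
    intro ε hε
    obtain ⟨N, hN⟩ := exists_pow_lt_of_lt_one hε (by norm_num : (1/2 : ℝ) < 1)
    refine ⟨N + 1, fun m hm => ?_⟩
    calc dist (g m x) (g (N+1) x) ≤ β (N+1) x := key (N+1) m hm x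
      _ ≤ (1/2 : ℝ) ^ (N+1) := hβsmall N x
      _ < (1/2 : ℝ) ^ N := by
          have : (0:ℝ) < (1/2 : ℝ) ^ N := by positivity
          rw [pow_succ]; linarith
      _ < ε := hN
  choose L hL using hcauchy
  have hdistL : ∀ n x, dist (L x) (g n x) ≤ β n x := by
    intro n x
    refine le_of_tendsto ((hL x).dist tendsto_const_nhds) ?_
    exact eventually_atTop.mpr ⟨n, fun m hm => key n m hm x⟩
  have hunif : TendstoUniformly (fun n x => g n x) L atTop := by
    rw [Metric.tendstoUniformly_iff]
    intro ε hε
    obtain ⟨N, hN⟩ := exists_pow_lt_of_lt_one hε (by norm_num : (1/2 : ℝ) < 1)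
    refine eventually_atTop.mpr ⟨N + 1, fun n hn x => ?_⟩
    calc dist (L x) (g n x) ≤ β n x := hdistL n x
      _ ≤ (1/2 : ℝ) ^ n := hβsmall' n (by omega) x
      _ ≤ (1/2 : ℝ) ^ N := by
          apply pow_le_pow_of_le_one (by norm_num) (by norm_num) (by omega)
      _ < ε := hN
  have hLc : Continuous L := hunif.continuous (Frequently.of_forall fun n => (g n).continuous)
  set G : C(X, E) := ⟨L, hLc⟩ with hGdef
  have hGdist : ∀ n x, dist (G x) (g n x) ≤ β n x := hdistL
  have hGb : G ∈ S := by
    obtain ⟨C, hC⟩ := Metric.isBounded_iff.mp ((hPn 1).1)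
    refine Metric.isBounded_iff.mpr ⟨1 + C + 1, ?_⟩
    rintro _ ⟨x, rfl⟩ _ ⟨y, rfl⟩
    have h1 : dist (g 1 x) (g 1 y) ≤ C := hC ⟨x, rfl⟩ ⟨y, rfl⟩
    have h2 : dist (G x) (g 1 x) ≤ 1 := (hGdist 1 x).trans ((hβsmall' 1 le_rfl x).trans
      (by norm_num))
    have h3 : dist (G y) (g 1 y) ≤ 1 := (hGdist 1 y).trans ((hβsmall' 1 le_rfl y).trans
      (by norm_num))
    have h4 : dist (g 1 y) (G y) = dist (G y) (g 1 y) := dist_comm _ _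
    calc dist (G x) (G y) ≤ dist (G x) (g 1 x) + dist (g 1 x) (g 1 y) + dist (g 1 y) (G y) :=
          dist_triangle4 _ _ _ _
      _ ≤ 1 + C + 1 := by rw [h4]; linarith
  refine ⟨⟨G, hGb⟩, ?_, ?_⟩
  · -- G ∈ V
    rw [← hU₀pre]
    exact hα₀ G (fun x => hGdist 0 x)
  · -- G ∈ ⋂ n, f n
    rw [mem_iInter]
    intro n
    rw [← hWpre n]
    exact (hrel n).2.2 G (fun x => hGdist (n+1) x)

/-- `C*(X, ℝ^p)` is open in `C(X, ℝ^p)` with respect to the source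
limitation topology; consequently `C*(X, ℝ^p)` with the (induced) source limitation
topology is a Baire space. -/
theorem statement15 {X : Type*} [TopologicalSpace X] [TopologicalSpace.MetrizableSpace X]
    (p : ℕ) (hp : 1 ≤ p) :
    @IsOpen _ (sourceLimitationCM X (EuclideanSpace ℝ (Fin p)))
      {u : C(X, EuclideanSpace ℝ (Fin p)) | Bornology.IsBounded (Set.range u)} ∧
    @BaireSpace
      {u : C(X, EuclideanSpace ℝ (Fin p)) | Bornology.IsBounded (Set.range u)}
      (TopologicalSpace.induced Subtype.val
        (sourceLimitationCM X (EuclideanSpace ℝ (Fin p)))) :=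
  ⟨slcm_isOpen_bounded, slcm_baire⟩
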